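/- Let φ ≥ 0 and μ ∈ ℝ. Define ρ(μ,φ) = φ/2 + (1/(2√2))·(φ² + 4 + √((φ² + 4)² + 16μ²))^{1/2}, which equals |Re(ζ_1^−)|. Then ρ(μ,φ) > 2 if and only if φ > 3/2, or (φ ∈ [0, 3/2] and |μ| > (4 − φ)√(3 − 2φ)). -/

import Mathlib

open Complex

/-- The exponent `ζ_1^- = -φ/2 - (1/2)√(φ² + 4(iμ + 1))` (principal square root). -/
noncomputable def zetaMinusOne (φ μ : ℝ) : ℂ :=
  -(φ/2 : ℂ) - (1/2) * ((φ^2 + 4*((μ : ℂ) * Complex.I + 1)) ^ ((1:ℂ)/2))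

/-- `ρ(μ,φ) = φ/2 + (1/(2√2))·(φ² + 4 + √((φ² + 4)² + 16μ²))^{1/2}`. -/
noncomputable def rho (μ φ : ℝ) : ℝ :=
  φ/2 + (1/(2 * Real.sqrt 2)) * Real.sqrt (φ^2 + 4 + Real.sqrt ((φ^2 + 4)^2 + 16 * μ^2))

private lemma sq_lt_sq_iff_aux (a b : ℝ) (ha : 0 ≤ a) (hb : 0 ≤ b) :
    a < b ↔ a^2 < b^2 := by
  constructor <;> intro h <;> nlinarith

/-- `ρ(μ,φ) = |Re ζ_1^-|`, and `ρ(μ,φ) > 2` iff `φ > 3/2` or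
(`φ ∈ [0,3/2]` and `|μ| > (4-φ)√(3-2φ)`). -/
theorem rho_gt_two_iff (φ μ : ℝ) (hφ : 0 ≤ φ) :
    rho μ φ = |(zetaMinusOne φ μ).re| ∧
    (2 < rho μ φ ↔
      (3/2 < φ ∨ (φ ≤ 3/2 ∧ (4 - φ) * Real.sqrt (3 - 2*φ) < |μ|))) := by
  set S : ℝ := Real.sqrt ((φ^2+4)^2 + 16*μ^2) with hS
  have hSsq : S^2 = (φ^2+4)^2 + 16*μ^2 := Real.sq_sqrt (by positivity)
  have hSnn : 0 ≤ S := Real.sqrt_nonneg _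
  have hSA : φ^2+4 ≤ S := by
    nlinarith [hSsq, hSnn]
  set T : ℝ := Real.sqrt (φ^2+4 + S) with hT
  have hTsq : T^2 = φ^2+4 + S := Real.sq_sqrt (by nlinarith)
  have hTpos : 0 < T := by rw [hT]; exact Real.sqrt_pos.2 (by nlinarith)
  have r2 : Real.sqrt 2 ^ 2 = 2 := Real.sq_sqrt (by norm_num)
  have r2pos : 0 < Real.sqrt 2 := Real.sqrt_pos.2 (by norm_num)
  have hrho : rho μ φ = φ/2 + T / (2 * Real.sqrt 2) := by
    rw [rho, hT, hS]; ring
  constructor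
  · -- rho = |Re ζ|
    have hre : (zetaMinusOne φ μ).re = -(φ/2) - (1/2) * (T / Real.sqrt 2) := by
      have h1 : ((φ:ℂ)^2 + 4*((μ : ℂ) * Complex.I + 1)) ^ ((1:ℂ)/2)
          = ((φ:ℂ)^2 + 4*((μ : ℂ) * Complex.I + 1)) ^ ((2:ℂ)⁻¹) := by
        norm_num
      have hz1 : ((φ:ℂ)^2 + 4*((μ : ℂ) * Complex.I + 1)).re = φ^2+4 := by
        simp [← Complex.ofReal_pow]
      have hz2 : ((φ:ℂ)^2 + 4*((μ : ℂ) * Complex.I + 1)).im = 4*μ := by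
        simp [← Complex.ofReal_pow]
      have habs : ‖((φ:ℂ)^2 + 4*((μ : ℂ) * Complex.I + 1))‖ = S := by
        rw [Complex.norm_def, Complex.normSq_apply, hz1, hz2, hS]
        ring_nf
      have hrec : (((φ:ℂ)^2 + 4*((μ : ℂ) * Complex.I + 1)) ^ ((2:ℂ)⁻¹)).re
          = T / Real.sqrt 2 := by
        rw [Complex.cpow_inv_two_re, habs, hz1, add_comm S (φ^2+4),
          Real.sqrt_div (by nlinarith : (0:ℝ) ≤ φ^2+4+S), ← hT]
      rw [zetaMinusOne, h1, Complex.sub_re, Complex.neg_re,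
        show ((1:ℂ)/2) = ((1/2 : ℝ) : ℂ) by norm_num,
        Complex.re_ofReal_mul, hrec,
        show ((φ:ℂ)/2) = ((φ/2 : ℝ) : ℂ) by push_cast; ring,
        Complex.ofReal_re]
    have hle : (zetaMinusOne φ μ).re ≤ 0 := by
      rw [hre]
      have : 0 ≤ T / Real.sqrt 2 := div_nonneg hTpos.le r2pos.le
      linarith
    rw [hrho, abs_of_nonpos hle, hre]
    ring
  · -- the inequality
    have key : 2 < rho μ φ ↔ (4 ≤ φ ∨ (3 - 2*φ) * (4 - φ)^2 < μ^2) := by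
      rw [hrho]
      constructor
      · intro h
        by_cases h4 : 4 ≤ φ
        · exact Or.inl h4
        push_neg at h4
        right
        have hTgt : Real.sqrt 2 * (4 - φ) < T := by
          have h1 : 2 - φ/2 < T/(2*Real.sqrt 2) := by linarith
          have h2 := (lt_div_iff₀ (by positivity : (0:ℝ) < 2*Real.sqrt 2)).mp h1
          have heq : Real.sqrt 2 * (4 - φ) = (2 - φ/2)*(2*Real.sqrt 2) := by ring
          linarith
        have ha : 0 ≤ Real.sqrt 2 * (4 - φ) := mul_nonneg r2pos.le (by linarith)
        have hT2 : 2 * (4 - φ)^2 < T^2 := by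
          have h3 := mul_self_lt_mul_self ha hTgt
          have hb : (Real.sqrt 2*(4-φ))*(Real.sqrt 2*(4-φ)) = 2*(4-φ)^2 := by
            linear_combination (4-φ)^2 * r2
          linarith [h3, hb]
        have hSgt : 2*(4-φ)^2 - (φ^2+4) < S := by linarith [hTsq]
        by_cases hB : 2*(4-φ)^2 - (φ^2+4) ≤ 0
        · -- then φ ≥ 2, so (3-2φ)(4-φ)² < 0 ≤ μ²
          have hφ2 : 2 ≤ φ := by nlinarith [hB, hφ]
          nlinarith [sq_nonneg μ,
            mul_pos (show (0:ℝ) < 2*φ-3 by linarith)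
              (pow_pos (show (0:ℝ) < 4-φ by linarith) 2)]
        · push_neg at hB
          have hsq : (2*(4-φ)^2 - (φ^2+4))^2 < S^2 := by
            linarith [mul_self_lt_mul_self hB.le hSgt, sq S,
              sq (2*(4-φ)^2 - (φ^2+4))]
          rw [hSsq] at hsq
          linarith [hsq]
      · intro h
        rcases h with h4 | hμ
        · have : 0 < T / (2*Real.sqrt 2) := div_pos hTpos (by positivity)
          linarith
        · by_cases h4 : 4 ≤ φ
          · have : 0 < T / (2*Real.sqrt 2) := div_pos hTpos (by positivity)
            linarith
          push_neg at h4
          have hSgt : 2*(4-φ)^2 - (φ^2+4) < S := by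
            by_cases hB : 2*(4-φ)^2 - (φ^2+4) ≤ 0
            · nlinarith [hSA, sq_nonneg φ]
            · push_neg at hB
              by_contra hc
              push_neg at hc
              have h3 := mul_self_le_mul_self hSnn hc
              nlinarith [h3, hSsq, hμ]
          have hT2 : 2*(4-φ)^2 < T^2 := by linarith [hTsq]
          have hTgt : Real.sqrt 2 * (4 - φ) < T := by
            by_contra hc
            push_neg at hc
            have h3 := mul_self_le_mul_self hTpos.le hc
            have hb : (Real.sqrt 2*(4-φ))*(Real.sqrt 2*(4-φ)) = 2*(4-φ)^2 := by
              linear_combination (4-φ)^2 * r2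
            linarith [h3, hb, hT2]
          have heq : Real.sqrt 2 * (4 - φ) = (2 - φ/2)*(2*Real.sqrt 2) := by ring
          have := (lt_div_iff₀ (by positivity : (0:ℝ) < 2*Real.sqrt 2)).mpr
            (show (2 - φ/2)*(2*Real.sqrt 2) < T by linarith)
          linarith
    rw [key]
    constructor
    · rintro (h4 | hμ)
      · exact Or.inl (by linarith)
      · by_cases h32 : 3/2 < φ
        · exact Or.inl h32
        · push_neg at h32
          right
          refine ⟨h32, ?_⟩
          have h3 : 0 ≤ 3 - 2*φ := by linarith
          have hb : ((4 - φ) * Real.sqrt (3 - 2*φ))^2 = (3 - 2*φ) * (4-φ)^2 := by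
            rw [mul_pow, Real.sq_sqrt h3]; ring
          have ha : 0 ≤ (4 - φ) * Real.sqrt (3 - 2*φ) :=
            mul_nonneg (by linarith) (Real.sqrt_nonneg _)
          rw [sq_lt_sq_iff_aux _ _ ha (abs_nonneg μ), hb, _root_.sq_abs]
          exact hμ
    · rintro (h32 | ⟨h32, hμ⟩)
      · by_cases h4 : 4 ≤ φ
        · exact Or.inl h4
        · push_neg at h4
          right
          have hp : (0:ℝ) < (4-φ)^2 := pow_pos (by linarith) 2
          linarith [sq_nonneg μ,
            mul_pos (show (0:ℝ) < 2*φ-3 by linarith) hp]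
      · right
        have h3 : 0 ≤ 3 - 2*φ := by linarith
        have hb : ((4 - φ) * Real.sqrt (3 - 2*φ))^2 = (3 - 2*φ) * (4-φ)^2 := by
          rw [mul_pow, Real.sq_sqrt h3]; ring
        have ha : 0 ≤ (4 - φ) * Real.sqrt (3 - 2*φ) :=
          mul_nonneg (by linarith) (Real.sqrt_nonneg _)
        have := (sq_lt_sq_iff_aux _ _ ha (abs_nonneg μ)).mp hμ
        rw [hb, _root_.sq_abs] at this
        linarith
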